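/- For real numbers l, a, b with 0 < l ≤ b ≤ a, the intersection probability P(l,a,b) equals (2/π)·(l/a + l/b) − (1/π)·l²/(ab). -/

import Mathlib

open Real MeasureTheory Filter

/-- `A(l,a) = ∫_0^π min(a, l·|cos φ|) dφ` -/
noncomputable def A2 (l a : ℝ) : ℝ := ∫ φ in (0:ℝ)..π, min a (l * |Real.cos φ|)

/-- `B(l,b) = ∫_0^π min(b, l·sin φ) dφ` -/
noncomputable def B2 (l b : ℝ) : ℝ := ∫ φ in (0:ℝ)..π, min b (l * Real.sin φ)

/-- `AB(l,a,b) = ∫_0^π min(a, l·|cos φ|)·min(b, l·sin φ) dφ` -/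
noncomputable def AB2 (l a b : ℝ) : ℝ :=
  ∫ φ in (0:ℝ)..π, min a (l * |Real.cos φ|) * min b (l * Real.sin φ)

/-- Intersection probability for the 2D Buffon–Laplace needle problem. -/
noncomputable def P2 (l a b : ℝ) : ℝ :=
  (b * A2 l a + a * B2 l b - AB2 l a b) / (π * a * b)

/-- Intersection probability for the 2D spherocylinder Buffon–Laplace problem. -/
noncomputable def P2sc (l σ a b : ℝ) : ℝ :=
  ((b - σ) * A2 l (a - σ) + (a - σ) * B2 l (b - σ) - AB2 l (a - σ) (b - σ)
    + (σ * a + σ * b - σ ^ 2) * π) / (π * a * b)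

/-- `A³ᴰ(l,a) = ∫_0^{π/2} ∫_0^π min(a, l·sin ψ·|cos φ|) dφ dψ` -/
noncomputable def A3 (l a : ℝ) : ℝ :=
  ∫ ψ in (0:ℝ)..(π/2), ∫ φ in (0:ℝ)..π, min a (l * Real.sin ψ * |Real.cos φ|)

/-- `B³ᴰ(l,b) = ∫_0^{π/2} ∫_0^π min(b, l·sin ψ·sin φ) dφ dψ` -/
noncomputable def B3 (l b : ℝ) : ℝ :=
  ∫ ψ in (0:ℝ)..(π/2), ∫ φ in (0:ℝ)..π, min b (l * Real.sin ψ * Real.sin φ)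

/-- `AB³ᴰ(l,a,b) = ∫_0^{π/2} ∫_0^π min(a, l·sin ψ·|cos φ|)·min(b, l·sin ψ·sin φ) dφ dψ` -/
noncomputable def AB3 (l a b : ℝ) : ℝ :=
  ∫ ψ in (0:ℝ)..(π/2), ∫ φ in (0:ℝ)..π,
    min a (l * Real.sin ψ * |Real.cos φ|) * min b (l * Real.sin ψ * Real.sin φ)

/-- `S³ᴰ(l,a,b) = b·A³ᴰ(l,a) + a·B³ᴰ(l,b) − AB³ᴰ(l,a,b)` -/
noncomputable def S3 (l a b : ℝ) : ℝ := b * A3 l a + a * B3 l b - AB3 l a b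

/-- `F(α,β,t) = ∫_α^β √(sin²ψ − t²) dψ` -/
noncomputable def Faux (α β t : ℝ) : ℝ :=
  ∫ ψ in α..β, Real.sqrt (Real.sin ψ ^ 2 - t ^ 2)

/-- `G(α,β,t) = ∫_α^β (π/2 − arcsin(t / sin ψ)) dψ` -/
noncomputable def Gaux (α β t : ℝ) : ℝ :=
  ∫ ψ in α..β, (π / 2 - Real.arcsin (t / Real.sin ψ))


lemma abs_cos_int : ∫ φ in (0:ℝ)..π, |Real.cos φ| = 2 := by
  have h1 : ∫ φ in (0:ℝ)..(π/2), |Real.cos φ| = 1 := by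
    rw [intervalIntegral.integral_congr (g := Real.cos)]
    · simp [integral_cos]
    · intro x hx
      rw [Set.uIcc_of_le (by positivity)] at hx
      exact abs_of_nonneg (Real.cos_nonneg_of_mem_Icc ⟨by linarith [hx.1, Real.pi_pos], hx.2⟩)
  have h2 : ∫ φ in (π/2:ℝ)..π, |Real.cos φ| = 1 := by
    rw [intervalIntegral.integral_congr (g := fun x => -Real.cos x)]
    · rw [intervalIntegral.integral_neg, integral_cos]; simp
    · intro x hx
      rw [Set.uIcc_of_le (by linarith [Real.pi_pos])] at hx
      exact abs_of_nonpos (Real.cos_nonpos_of_pi_div_two_le_of_le hx.1 (by linarith [hx.2, Real.pi_pos]))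
  have h3 := intervalIntegral.integral_add_adjacent_intervals (a := (0:ℝ)) (b := π/2) (c := π)
    (f := fun x => |Real.cos x|)
    ((Real.continuous_cos.abs).intervalIntegrable (μ := volume) _ _)
    ((Real.continuous_cos.abs).intervalIntegrable (μ := volume) _ _)
  rw [← h3, h1, h2]; norm_num

lemma abs_cos_sin_int : ∫ φ in (0:ℝ)..π, |Real.cos φ| * Real.sin φ = 1 := by
  have h1 : ∫ φ in (0:ℝ)..(π/2), |Real.cos φ| * Real.sin φ = 1/2 := by
    rw [intervalIntegral.integral_congr (g := fun x => Real.sin x * Real.cos x)]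
    · rw [integral_sin_mul_cos₁]; norm_num
    · intro x hx
      rw [Set.uIcc_of_le (by positivity)] at hx
      simp only
      rw [abs_of_nonneg (Real.cos_nonneg_of_mem_Icc ⟨by linarith [hx.1, Real.pi_pos], hx.2⟩)]; ring
  have h2 : ∫ φ in (π/2:ℝ)..π, |Real.cos φ| * Real.sin φ = 1/2 := by
    rw [intervalIntegral.integral_congr (g := fun x => -(Real.sin x * Real.cos x))]
    · rw [intervalIntegral.integral_neg, integral_sin_mul_cos₁]; simp; norm_num
    · intro x hx
      rw [Set.uIcc_of_le (by linarith [Real.pi_pos])] at hx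
      simp only
      rw [abs_of_nonpos (Real.cos_nonpos_of_pi_div_two_le_of_le hx.1 (by linarith [hx.2, Real.pi_pos]))]; ring
  have h3 := intervalIntegral.integral_add_adjacent_intervals (a := (0:ℝ)) (b := π/2) (c := π)
    (f := fun x => |Real.cos x| * Real.sin x)
    ((Real.continuous_cos.abs.mul Real.continuous_sin).intervalIntegrable (μ := volume) _ _)
    ((Real.continuous_cos.abs.mul Real.continuous_sin).intervalIntegrable (μ := volume) _ _)
  rw [← h3, h1, h2]; norm_num

theorem stmt5 (l a b : ℝ) (hl : 0 < l) (hlb : l ≤ b) (hba : b ≤ a) :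
    P2 l a b = 2 / π * (l / a + l / b) - 1 / π * (l ^ 2 / (a * b)) := by
  have hpi := Real.pi_pos
  have hsin : ∀ x ∈ Set.uIcc (0:ℝ) π, min b (l * Real.sin x) = l * Real.sin x := by
    intro x hx
    rw [Set.uIcc_of_le (le_of_lt hpi)] at hx
    refine min_eq_right ?_
    have h1 : Real.sin x ≤ 1 := Real.sin_le_one x
    nlinarith
  have hcos : ∀ x ∈ Set.uIcc (0:ℝ) π, min a (l * |Real.cos x|) = l * |Real.cos x| := by
    intro x _
    refine min_eq_right ?_
    have h1 : |Real.cos x| ≤ 1 := abs_cos_le_one x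
    nlinarith
  have hA : A2 l a = 2 * l := by
    unfold A2
    rw [intervalIntegral.integral_congr hcos]
    rw [show (fun x => l * |Real.cos x|) = fun x => l * |Real.cos x| from rfl,
      intervalIntegral.integral_const_mul, abs_cos_int]
    ring
  have hB : B2 l b = 2 * l := by
    unfold B2
    rw [intervalIntegral.integral_congr hsin, intervalIntegral.integral_const_mul,
      integral_sin]
    simp; ring
  have hAB : AB2 l a b = l ^ 2 := by
    unfold AB2
    rw [intervalIntegral.integral_congr
      (g := fun x => l ^ 2 * (|Real.cos x| * Real.sin x))]
    · rw [intervalIntegral.integral_const_mul, abs_cos_sin_int]; ring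
    · intro x hx
      simp only
      rw [hcos x hx, hsin x hx]; ring
  have ha : a ≠ 0 := by linarith
  have hb : b ≠ 0 := by linarith
  unfold P2
  rw [hA, hB, hAB]
  field_simp
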